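/- Let s₁ > 0 > s₂ and let B be a 2×2 symmetric positive definite matrix. Then −s₁ tr B − s₂ tr(B⁻¹) ≤ −2s₂ tr(B⁻¹) − 2(s₁√(det B) − s₂/√(det B)); that is, a* ≤ a₀. -/

import Mathlib

open Matrix

theorem astar_le_a0 (s₁ s₂ : ℝ) (h₁ : 0 < s₁) (h₂ : s₂ < 0)
    (B : Matrix (Fin 2) (Fin 2) ℝ) (hB : B.PosDef) :
    -(s₁ * B.trace) - s₂ * B⁻¹.trace ≤
      -2 * s₂ * B⁻¹.trace - 2 * (s₁ * Real.sqrt B.det - s₂ / Real.sqrt B.det) := by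
  have hd : 0 < B.det := hB.det_pos
  set a := B 0 0 with ha
  set c := B 1 1 with hc
  set b := B 0 1 with hb
  have hsym : B 1 0 = b := by
    have := hB.1
    rw [Matrix.IsHermitian] at this
    calc B 1 0 = Bᴴ 1 0 := by rw [this]
    _ = b := by simp [Matrix.conjTranspose_apply, hb]
  have hdet : B.det = a * c - b * b := by
    rw [Matrix.det_fin_two, hsym]
  have htr : B.trace = a + c := by rw [Matrix.trace_fin_two]
  have htrinv : B⁻¹.trace = (a + c) / B.det := by
    rw [Matrix.inv_def, Ring.inverse_eq_inv, Matrix.trace_fin_two]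
    simp only [Matrix.adjugate_fin_two, Matrix.smul_apply, Matrix.cons_val', Matrix.cons_val_zero,
      Matrix.empty_val', Matrix.cons_val_fin_one, Matrix.cons_val_one, Matrix.head_cons,
      Matrix.head_fin_const, smul_eq_mul, Matrix.of_apply]
    field_simp
    ring
  have ha0 : 0 < a := by
    have := hB.dotProduct_mulVec_pos (x := ![1, 0]) (by intro h; exact one_ne_zero (congrFun h 0))
    simpa [dotProduct, mulVec, Fin.sum_univ_two] using this
  have hc0 : 0 < c := by
    have := hB.dotProduct_mulVec_pos (x := ![0, 1]) (by intro h; exact one_ne_zero (congrFun h 1))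
    simpa [dotProduct, mulVec, Fin.sum_univ_two] using this
  set r := Real.sqrt B.det with hr
  have hr0 : 0 < r := Real.sqrt_pos.mpr hd
  have hr2 : r * r = B.det := Real.mul_self_sqrt hd.le
  have hT : 2 * r ≤ a + c := by
    have h1 : r ≤ (a + c) / 2 := by
      rw [hr, show (a + c) / 2 = Real.sqrt (((a + c) / 2) ^ 2) by
        rw [Real.sqrt_sq (by positivity)]]
      apply Real.sqrt_le_sqrt
      rw [hdet]; nlinarith [sq_nonneg (a - c), sq_nonneg b]
    linarith
  rw [htrinv, htr, ← hr2]
  have h2 : s₂ * (a + c - 2 * r) ≤ 0 :=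
    mul_nonpos_of_nonpos_of_nonneg h₂.le (by linarith)
  have h3 : 0 ≤ s₁ * (a + c - 2 * r) * (r * r) :=
    mul_nonneg (mul_nonneg h₁.le (by linarith)) (by positivity)
  have hrr : (0:ℝ) < r * r := by positivity
  rw [← sub_nonneg]
  have expand : -2 * s₂ * ((a + c) / (r * r)) - 2 * (s₁ * r - s₂ / r) -
      (-(s₁ * (a + c)) - s₂ * ((a + c) / (r * r))) =
      (s₁ * (a + c - 2 * r) * (r * r) + (-s₂) * (a + c - 2 * r)) / (r * r) := by
    field_simp
    ring
  rw [expand]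
  apply div_nonneg _ hrr.le
  linarith
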